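/- Let q be a prime power, h ≥ 2, and W an (h+1)-dimensional F_q-subspace of V = F_{q^h}^3 such that L_W = {⟨v⟩_{F_{q^h}} : v ∈ W, v ≠ 0} is a blocking set of PG(2, q^h) not containing a line, and L_W contains a point P with dim_{F_q}(W ∩ ⟨P⟩_{F_{q^h}}) = h−1. Then there exists a projectivity of PG(2, q^h) mapping L_W onto {(x : Tr_{q^h/q}(x) : y) : x ∈ F_{q^h}, y ∈ F_q, (x,y) ≠ (0,0)}. -/

import Mathlib

/-- The relative trace `x ↦ x + x^q + ⋯ + x^{q^{h-1}}`. -/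
def Tr (q h : ℕ) {K : Type*} [Field K] (x : K) : K :=
  ∑ i ∈ Finset.range h, x ^ q ^ i

/-- The line of `PG(2, K)` with equation `a 0 * X + a 1 * Y + a 2 * Z = 0`. -/
def projLine {K : Type*} [Field K] (a : Fin 3 → K) :
    Set (Projectivization K (Fin 3 → K)) :=
  {P | ∑ i, a i * P.rep i = 0}

/-- A subset of `PG(2, K)` is a line if it is `projLine a` for some nonzero `a`. -/
def IsLine {K : Type*} [Field K] (ℓ : Set (Projectivization K (Fin 3 → K))) : Prop :=
  ∃ a : Fin 3 → K, a ≠ 0 ∧ ℓ = projLine a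

/-- The trace-construction point set
`{(x : Tr(x) : y) : x ∈ F_{q^h}, y ∈ F_q, (x,y) ≠ (0,0)}` in `PG(2, q^h)`. -/
def traceSet (q h : ℕ) (F K : Type*) [Field F] [Field K] [Algebra F K] :
    Set (Projectivization K (Fin 3 → K)) :=
  {P | ∃ (x : K) (y : F), (x ≠ 0 ∨ y ≠ 0) ∧
    ∃ hv : (![x, Tr q h x, algebraMap F K y] : Fin 3 → K) ≠ 0,
      P = Projectivization.mk K (![x, Tr q h x, algebraMap F K y]) hv}

/-! ### Auxiliary lemmas -/

section TrLemmas

lemma aux_fixed_pow {K : Type*} [Field K] {q : ℕ} {l : K} (hl : l ^ q = l) (i : ℕ) :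
    l ^ q ^ i = l := by
  induction i with
  | zero => simp
  | succ n ih => rw [pow_succ, pow_mul, ih, hl]

lemma Tr_add {K : Type*} [Field K] {p q k : ℕ} [Fact p.Prime] [CharP K p]
    (hqp : q = p ^ k) (h : ℕ) (x y : K) : Tr q h (x + y) = Tr q h x + Tr q h y := by
  unfold Tr
  rw [← Finset.sum_add_distrib]
  refine Finset.sum_congr rfl fun i _ => ?_
  subst hqp
  rw [← pow_mul]
  exact add_pow_char_pow ..

lemma Tr_smul {K : Type*} [Field K] {q : ℕ} {l : K} (hl : l ^ q = l) (h : ℕ) (x : K) :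
    Tr q h (l * x) = l * Tr q h x := by
  unfold Tr
  rw [Finset.mul_sum]
  refine Finset.sum_congr rfl fun i _ => ?_
  rw [mul_pow, aux_fixed_pow hl]

lemma Tr_zero {K : Type*} [Field K] {q : ℕ} (hq0 : q ≠ 0) (h : ℕ) : Tr q h (0 : K) = 0 := by
  unfold Tr
  exact Finset.sum_eq_zero fun i _ => zero_pow (pow_ne_zero _ hq0)

lemma Tr_pow_q {K : Type*} [Field K] {p q k h : ℕ} [Fact p.Prime] [CharP K p]
    (hqp : q = p ^ k) (x : K) (hxh : x ^ q ^ h = x) :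
    Tr q h x ^ q = Tr q h x := by
  unfold Tr
  have step : (∑ i ∈ Finset.range h, x ^ q ^ i) ^ q
      = ∑ i ∈ Finset.range h, x ^ q ^ (i + 1) := by
    rw [hqp, sum_pow_char_pow]
    refine Finset.sum_congr rfl fun i _ => ?_
    rw [← hqp, ← pow_mul, pow_succ]
  rw [step]
  have e1 := Finset.sum_range_succ' (fun i => x ^ q ^ i) h
  have e2 := Finset.sum_range_succ (fun i => x ^ q ^ i) h
  have e3 : (∑ i ∈ Finset.range h, x ^ q ^ (i + 1)) + x ^ q ^ 0
      = (∑ i ∈ Finset.range h, x ^ q ^ i) + x ^ q ^ h := e1.symm.trans e2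
  rw [hxh, pow_zero, pow_one] at e3
  exact add_right_cancel e3

lemma aux_charP {F : Type*} [Field F] [Fintype F] {q : ℕ} (hq : IsPrimePow q)
    (hcard : Fintype.card F = q) :
    ∃ p k : ℕ, Nat.Prime p ∧ 0 < k ∧ q = p ^ k ∧ CharP F p := by
  obtain ⟨p, k, hp, hk, hpk⟩ := hq
  rw [← Nat.prime_iff] at hp
  haveI := ringChar.charP F
  obtain ⟨n, hp', hcard'⟩ := FiniteField.card F (ringChar F)
  have hpq : p ∣ q := hpk ▸ dvd_pow_self p hk.ne'
  have hdvd : p ∣ (ringChar F) ^ (n : ℕ) := by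
    rw [← hcard', hcard]; exact hpq
  have : p = ringChar F :=
    (Nat.prime_dvd_prime_iff_eq hp hp').mp (hp.dvd_of_dvd_pow hdvd)
  exact ⟨p, k, hp, hk, hpk.symm, this ▸ ringChar.charP F⟩

lemma aux_cardK {F K : Type*} [Field F] [Field K] [Algebra F K] [Fintype F] [Fintype K]
    {q h : ℕ} (hcard : Fintype.card F = q) (hrank : Module.finrank F K = h) :
    Fintype.card K = q ^ h := by
  rw [Module.card_eq_pow_finrank (K := F) (V := K), hcard, hrank]

lemma aux_fixed_mem {F K : Type*} [Field F] [Field K] [Algebra F K] [Fintype F] [Fintype K]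
    {q : ℕ} (hq2 : 1 < q) (hcard : Fintype.card F = q) {y : K} (hy : y ^ q = y) :
    ∃ a : F, algebraMap F K a = y := by
  classical
  by_contra hcon
  push_neg at hcon
  set P : Polynomial K := Polynomial.X ^ q - Polynomial.X with hP
  have hPne : P ≠ 0 := FiniteField.X_pow_card_sub_X_ne_zero K hq2
  have hdeg : P.natDegree = q := FiniteField.X_pow_card_sub_X_natDegree_eq K hq2
  set S : Finset K := Finset.univ.image (algebraMap F K) with hS
  have hyS : y ∉ S := by
    simp only [hS, Finset.mem_image, Finset.mem_univ, true_and]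
    rintro ⟨a, ha⟩; exact hcon a ha
  have hsub : insert y S ⊆ P.roots.toFinset := by
    intro z hz
    rw [Multiset.mem_toFinset, Polynomial.mem_roots hPne]
    rw [Finset.mem_insert] at hz
    have hzq : z ^ q = z := by
      rcases hz with rfl | hz
      · exact hy
      · obtain ⟨a, -, rfl⟩ := Finset.mem_image.mp hz
        rw [← map_pow]
        congr 1
        rw [← hcard]; exact FiniteField.pow_card a
    simp [hP, Polynomial.IsRoot, hzq]
  have h1 : (insert y S).card = q + 1 := by
    rw [Finset.card_insert_of_notMem hyS,
      Finset.card_image_of_injective _ (algebraMap F K).injective, Finset.card_univ, hcard]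
  have h2 : (insert y S).card ≤ q := by
    calc (insert y S).card ≤ P.roots.toFinset.card := Finset.card_le_card hsub
      _ ≤ Multiset.card P.roots := Multiset.toFinset_card_le _
      _ ≤ P.natDegree := Polynomial.card_roots' P
      _ = q := hdeg
  omega

lemma aux_Tr_ne_zero {K : Type*} [Field K] [Fintype K] {q h : ℕ} (hq2 : 1 < q) (hh : 1 ≤ h)
    (hcardK : Fintype.card K = q ^ h) : ∃ x : K, Tr q h x ≠ 0 := by
  by_contra hcon
  push_neg at hcon
  set g : Polynomial K := ∑ i ∈ Finset.range h, Polynomial.X ^ q ^ i with hg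
  have heval : ∀ x : K, g.eval x = Tr q h x := by
    intro x
    simp [hg, Tr, Polynomial.eval_finset_sum]
  have hgz : g = 0 := by
    apply Polynomial.eq_zero_of_natDegree_lt_card_of_eval_eq_zero g (f := id _)
      Function.injective_id
    · intro x; rw [heval, hcon]
    · have hd : g.natDegree ≤ q ^ (h - 1) := by
        apply Polynomial.natDegree_sum_le_of_forall_le
        intro i hi
        rw [Polynomial.natDegree_X_pow]
        exact Nat.pow_le_pow_right (by omega) (by simp at hi; omega)
      have hlt : q ^ (h - 1) < q ^ h := Nat.pow_lt_pow_right hq2 (by omega)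
      calc g.natDegree ≤ q ^ (h-1) := hd
        _ < q ^ h := hlt
        _ = Fintype.card K := hcardK.symm
  have hc : g.coeff (q ^ (h - 1)) = 1 := by
    rw [hg, Polynomial.finset_sum_coeff]
    rw [Finset.sum_eq_single (h - 1)]
    · simp
    · intro i hi hne
      have hqi : q ^ i ≠ q ^ (h - 1) := fun e => hne (Nat.pow_right_injective hq2 e)
      simp only [Polynomial.coeff_X_pow]
      exact if_neg (fun e => hqi e.symm)
    · intro hmem
      exact absurd (Finset.mem_range.mpr (by omega)) hmem
  rw [hgz] at hc
  simp at hc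

end TrLemmas

section LineLemmas

noncomputable def lfun {K : Type*} [Field K] (a : Fin 3 → K) : (Fin 3 → K) →ₗ[K] K :=
  ∑ i, a i • LinearMap.proj i

lemma lfun_apply {K : Type*} [Field K] (a v : Fin 3 → K) :
    lfun a v = ∑ i, a i * v i := by
  simp [lfun]

lemma lfun_single {K : Type*} [Field K] (a : Fin 3 → K) (i : Fin 3) :
    lfun a (Pi.single i 1) = a i := by
  rw [lfun_apply, Finset.sum_eq_single i]
  · simp
  · intro j _ hj; simp [Pi.single_apply, hj]
  · simp

lemma dual_eq_lfun {K : Type*} [Field K] (f : (Fin 3 → K) →ₗ[K] K) (v : Fin 3 → K) :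
    f v = lfun (fun i => f (Pi.single i 1)) v := by
  rw [lfun_apply]
  have hv : v = ∑ i, Pi.single i (v i) := (Finset.univ_sum_single v).symm
  conv_lhs => rw [hv]
  rw [map_sum]
  refine Finset.sum_congr rfl fun i _ => ?_
  have h1 : (Pi.single i (v i) : Fin 3 → K) = v i • (Pi.single i 1 : Fin 3 → K) := by
    rw [← Pi.single_smul, smul_eq_mul, mul_one]
  rw [h1, map_smul, smul_eq_mul, mul_comm]

lemma aux_line_inter {K : Type*} [Field K] {a b : Fin 3 → K} (ha : a ≠ 0)
    (hb : b ∉ Submodule.span K {a}) {P Q : Projectivization K (Fin 3 → K)}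
    (hPa : P ∈ projLine a) (hPb : P ∈ projLine b)
    (hQa : Q ∈ projLine a) (hQb : Q ∈ projLine b) : P = Q := by
  classical
  set Φ : (Fin 3 → K) →ₗ[K] K × K := (lfun a).prod (lfun b) with hΦ
  have hrange : LinearMap.range Φ = ⊤ := by
    by_contra hne
    obtain ⟨ψ, hψne, hψ⟩ :=
      Submodule.exists_dual_map_eq_bot_of_lt_top (lt_top_iff_ne_top.mpr hne) inferInstance
    have hψv : ∀ v : Fin 3 → K, ψ (Φ v) = 0 := by
      intro v
      have hmem : Φ v ∈ LinearMap.range Φ := ⟨v, rfl⟩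
      have := Submodule.mem_map_of_mem (f := ψ) hmem
      rw [hψ] at this
      exact this
    set α := ψ (1, 0) with hα
    set β := ψ (0, 1) with hβ
    have hdecomp : ∀ x y : K, ψ (x, y) = x * α + y * β := by
      intro x y
      have hxy : ((x, y) : K × K) = x • ((1:K), (0:K)) + y • ((0:K), (1:K)) := by
        simp [Prod.ext_iff]
      rw [hxy, map_add, map_smul, map_smul, smul_eq_mul, smul_eq_mul]
    have hcomb : ∀ i, α * a i + β * b i = 0 := by
      intro i
      have := hψv (Pi.single i 1)
      rw [hΦ] at this
      simp only [LinearMap.prod_apply, Function.prod] at this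
      rw [hdecomp, lfun_single, lfun_single] at this
      linear_combination this
    by_cases hβ0 : β = 0
    · have hα0 : α ≠ 0 := by
        intro hα0
        apply hψne
        apply LinearMap.ext
        rintro ⟨x, y⟩
        rw [hdecomp, hα0, hβ0]; simp
      apply ha
      funext i
      have hci := hcomb i
      rw [hβ0] at hci
      simp only [zero_mul, add_zero] at hci
      have hai : a i = 0 := by
        rcases mul_eq_zero.mp hci with hz | hz
        · exact absurd hz hα0
        · exact hz
      simpa using hai
    · apply hb
      rw [Submodule.mem_span_singleton]
      refine ⟨-α / β, ?_⟩
      ext i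
      have := hcomb i
      rw [Pi.smul_apply, smul_eq_mul]
      field_simp
      linear_combination -this
  have hker : Module.finrank K (LinearMap.ker Φ) = 1 := by
    have h1 := LinearMap.finrank_range_add_finrank_ker Φ
    rw [hrange, finrank_top] at h1
    have h2 : Module.finrank K (K × K) = 2 := by
      rw [Module.finrank_prod, Module.finrank_self]
    have h3 : Module.finrank K (Fin 3 → K) = 3 := by
      rw [Module.finrank_pi]; simp
    omega
  have hmem : ∀ R : Projectivization K (Fin 3 → K),
      R ∈ projLine a → R ∈ projLine b → R.rep ∈ LinearMap.ker Φ := by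
    intro R h1 h2
    rw [LinearMap.mem_ker, hΦ]
    have e1 : lfun a R.rep = 0 := by rw [lfun_apply]; exact h1
    have e2 : lfun b R.rep = 0 := by rw [lfun_apply]; exact h2
    simp [LinearMap.prod_apply, e1, e2, Function.prod, Prod.ext_iff]
  have hsp : Submodule.span K {P.rep} = LinearMap.ker Φ := by
    apply Submodule.eq_of_le_of_finrank_le
    · rw [Submodule.span_le, Set.singleton_subset_iff]
      exact hmem P hPa hPb
    · rw [hker, finrank_span_singleton P.rep_nonzero]
  have hQmem : Q.rep ∈ Submodule.span K {P.rep} := hsp ▸ hmem Q hQa hQb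
  obtain ⟨c, hc⟩ := Submodule.mem_span_singleton.mp hQmem
  have hfin : Projectivization.mk K Q.rep Q.rep_nonzero
      = Projectivization.mk K P.rep P.rep_nonzero := by
    rw [Projectivization.mk_eq_mk_iff']
    exact ⟨c, hc⟩
  rw [Projectivization.mk_rep, Projectivization.mk_rep] at hfin
  exact hfin.symm

end LineLemmas

set_option maxHeartbeats 2000000 in
set_option synthInstance.maxHeartbeats 200000 in
/-- An `(h+1)`-dimensional `F_q`-subspace `W` of `F_{q^h}³` defining a
nontrivial blocking set `L_W` with a point of weight `h−1` gives a set projectively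
equivalent to the trace construction. -/
theorem stmt_10 {F K : Type*} [Field F] [Field K] [Algebra F K]
    [Fintype F] [Fintype K]
    (q h : ℕ) (hq : IsPrimePow q) (hcard : Fintype.card F = q)
    (hh : 2 ≤ h) (hrank : Module.finrank F K = h)
    (W : Submodule F (Fin 3 → K)) (hW : Module.finrank F W = h + 1)
    (L : Set (Projectivization K (Fin 3 → K)))
    (hL : L = {P | ∃ m ∈ (W : Set (Fin 3 → K)), ∃ hm : m ≠ 0,
      P = Projectivization.mk K m hm})
    (hblock : ∀ a : Fin 3 → K, a ≠ 0 → (projLine a ∩ L).Nonempty)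
    (hnontriv : ∀ ℓ : Set (Projectivization K (Fin 3 → K)), IsLine ℓ → ¬ ℓ ⊆ L)
    (hweight : ∃ (m : Fin 3 → K) (hm : m ≠ 0), Projectivization.mk K m hm ∈ L ∧
      Module.finrank F
        ↥(W ⊓ (Submodule.span K {m}).restrictScalars F) = h - 1) :
    ∃ σ : (Fin 3 → K) ≃ₗ[K] (Fin 3 → K),
      Projectivization.map σ.toLinearMap σ.injective '' L = traceSet q h F K := by
  classical
  obtain ⟨p, k, hp, hk, hqp, hFp⟩ := aux_charP hq hcard
  haveI := hFp
  haveI : Fact p.Prime := ⟨hp⟩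
  haveI : CharP K p := charP_of_injective_algebraMap (algebraMap F K).injective p
  have hq2 : 1 < q := hq.two_le
  have hq0 : q ≠ 0 := by omega
  have hcardK : Fintype.card K = q ^ h := aux_cardK hcard hrank
  have hpowK : ∀ x : K, x ^ q ^ h = x := fun x => by
    rw [← hcardK]; exact FiniteField.pow_card x
  set FK := algebraMap F K with hFK
  have hFKinj : Function.Injective FK := FK.injective
  have hfix : ∀ a : F, (FK a) ^ q = FK a := fun a => by
    rw [← map_pow]
    congr 1
    rw [← hcard]
    exact FiniteField.pow_card a
  -- Tr lands in (the image of) F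
  have hTrF : ∀ x : K, ∃ a : F, FK a = Tr q h x := fun x =>
    aux_fixed_mem hq2 hcard (Tr_pow_q hqp x (hpowK x))
  choose τf hτf using hTrF
  -- finiteness instances
  haveI : Module.Finite F K := Module.finite_iff_finite.mpr inferInstance
  haveI : Module.Finite F (Fin 3 → K) := Module.finite_iff_finite.mpr inferInstance
  -- the F-linear trace functional τ : K →ₗ[F] F
  have τadd : ∀ x y : K, τf (x + y) = τf x + τf y := by
    intro x y
    apply hFKinj
    rw [map_add, hτf, hτf, hτf, Tr_add hqp]
  have τsmul : ∀ (a : F) (x : K), τf (a • x) = a • τf x := by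
    intro a x
    apply hFKinj
    rw [hτf, Algebra.smul_def, Tr_smul (hfix a)]
    rw [smul_eq_mul, map_mul, hτf]
  let τ : K →ₗ[F] F :=
    { toFun := τf
      map_add' := τadd
      map_smul' := τsmul }
  obtain ⟨x₁, hx₁⟩ := aux_Tr_ne_zero hq2 (by omega) hcardK
  have hτx₁ : τf x₁ ≠ 0 := fun hz => hx₁ (by rw [← hτf, hz, map_zero])
  -- an element of trace one
  set x₀ : K := (FK (τf x₁))⁻¹ * x₁ with hx₀def
  have hFKτx₁ : FK (τf x₁) ≠ 0 := fun hz => hτx₁ (hFKinj (by rw [hz, map_zero]))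
  have hTrx₀ : Tr q h x₀ = 1 := by
    rw [hx₀def, ← map_inv₀, Tr_smul (hfix _), map_inv₀, ← hτf x₁]
    exact inv_mul_cancel₀ hFKτx₁
  -- the point of weight h - 1
  obtain ⟨m₀, hm₀, hm₀L, hwt⟩ := hweight
  rw [hL] at hm₀L
  obtain ⟨m, hmW, hm, hmk⟩ := hm₀L
  have hspan : Submodule.span K {m₀} = Submodule.span K {m} := by
    rw [Projectivization.mk_eq_mk_iff] at hmk
    obtain ⟨u, hu⟩ := hmk
    rw [← hu]
    exact Submodule.span_singleton_group_smul_eq K u m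
  rw [hspan] at hwt
  -- U' = the F-subspace of coefficients c with c • m ∈ W
  set μ : K →ₗ[F] (Fin 3 → K) :=
    (LinearMap.toSpanSingleton K (Fin 3 → K) m).restrictScalars F with hμ
  have hμapply : ∀ c : K, μ c = c • m := fun c => rfl
  have hμinj : Function.Injective μ := by
    intro c d hcd
    have : c • m = d • m := hcd
    have : (c - d) • m = 0 := by rw [sub_smul, this, sub_self]
    rcases smul_eq_zero.mp this with hz | hz
    · exact sub_eq_zero.mp hz
    · exact absurd hz hm
  set U' : Submodule F K := W.comap μ with hU'def
  have hmemU' : ∀ c : K, c ∈ U' ↔ c • m ∈ W := fun c => Iff.rfl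
  -- U = W ⊓ span{m} equals the image of U' under μ
  have hUeq : Submodule.map μ U' = W ⊓ (Submodule.span K {m}).restrictScalars F := by
    apply le_antisymm
    · rintro - ⟨c, hc, rfl⟩
      exact ⟨hc, Submodule.mem_span_singleton.mpr ⟨c, rfl⟩⟩
    · rintro u ⟨huW, huX⟩
      obtain ⟨c, rfl⟩ := Submodule.mem_span_singleton.mp huX
      exact ⟨c, huW, rfl⟩
  have hU' : Module.finrank F U' = h - 1 := by
    rw [← hwt, ← hUeq]
    exact (Submodule.equivMapOfInjective μ hμinj U').finrank_eq
  -- construct δ via the nondegenerate trace pairing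
  have hqr : Module.finrank F (K ⧸ U') = 1 := by
    have := Submodule.finrank_quotient_add_finrank U'
    rw [hrank, hU'] at this
    omega
  let e : (K ⧸ U') ≃ₗ[F] F :=
    LinearEquiv.ofFinrankEq _ _ (by rw [hqr, Module.finrank_self])
  let ψ : K →ₗ[F] F := e.toLinearMap ∘ₗ U'.mkQ
  have hkerψ : ∀ c : K, ψ c = 0 ↔ c ∈ U' := by
    intro c
    constructor
    · intro hc
      have h0 : e (U'.mkQ c) = e 0 := by simpa [ψ] using hc
      have := e.injective h0
      rwa [Submodule.mkQ_apply, Submodule.Quotient.mk_eq_zero] at this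
    · intro hc
      simp [ψ, Submodule.mkQ_apply, (Submodule.Quotient.mk_eq_zero _).mpr hc]
  let Θ : K →ₗ[F] (K →ₗ[F] F) := (LinearMap.mul F K).compr₂ τ
  have hΘapply : ∀ d c : K, Θ d c = τf (d * c) := fun d c => rfl
  have hΘinj : Function.Injective Θ := by
    rw [injective_iff_map_eq_zero]
    intro d hd
    by_contra hdne
    apply hτx₁
    have : Θ d (d⁻¹ * x₁) = 0 := by rw [hd]; rfl
    rw [hΘapply, ← mul_assoc, mul_inv_cancel₀ hdne, one_mul] at this
    exact this
  have hΘsurj : Function.Surjective Θ := by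
    have hrk := LinearMap.finrank_range_add_finrank_ker Θ
    rw [LinearMap.ker_eq_bot.mpr hΘinj, finrank_bot, add_zero] at hrk
    have hdual : Module.finrank F (K →ₗ[F] F) = h := by
      have := Subspace.dual_finrank_eq (K := F) (V := K)
      rw [hrank] at this
      exact this
    rw [← LinearMap.range_eq_top]
    apply Submodule.eq_top_of_finrank_eq
    rw [hrk, hrank, hdual]
  obtain ⟨δ, hδ⟩ := hΘsurj ψ
  have hδ0 : δ ≠ 0 := by
    intro hz
    have hallU' : ∀ c : K, c ∈ U' := by
      intro c
      rw [← hkerψ, ← hδ, hΘapply, hz, zero_mul]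
      apply hFKinj
      rw [hτf, map_zero, Tr_zero hq0]
    have : U' = ⊤ := by
      apply Submodule.eq_top_iff'.mpr hallU'
    rw [this, finrank_top, hrank] at hU'
    omega
  have hU'trace : ∀ c : K, c ∈ U' ↔ Tr q h (δ * c) = 0 := by
    intro c
    rw [← hkerψ, ← hδ, hΘapply, ← hτf (δ * c)]
    constructor
    · intro hz; rw [hz, map_zero]
    · intro hz; exact hFKinj (by rw [hz, map_zero])
  -- W spans K³ over K
  have hspanW : Submodule.span K (W : Set (Fin 3 → K)) = ⊤ := by
    by_contra hne
    obtain ⟨f, hfne, hf⟩ :=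
      Submodule.exists_dual_map_eq_bot_of_lt_top (lt_top_iff_ne_top.mpr hne) inferInstance
    set a : Fin 3 → K := fun i => f (Pi.single i 1) with hadef
    have hfa : ∀ v, f v = lfun a v := dual_eq_lfun f
    have ha : a ≠ 0 := by
      intro h0
      apply hfne
      apply LinearMap.ext
      intro v
      rw [hfa, h0]
      simp [lfun_apply]
    have hvan : ∀ v ∈ Submodule.span K (W : Set (Fin 3 → K)), lfun a v = 0 := by
      intro v hv
      rw [← hfa]
      have : f v ∈ Submodule.map f (Submodule.span K (W : Set (Fin 3 → K))) :=
        Submodule.mem_map_of_mem hv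
      rw [hf] at this
      exact this
    have hLsub : L ⊆ projLine a := by
      intro P hP
      rw [hL] at hP
      obtain ⟨w, hwW, hwne, rfl⟩ := hP
      obtain ⟨u, hu⟩ := Projectivization.exists_smul_eq_mk_rep K w hwne
      show ∑ i, a i * _ = 0
      have hmem : (Projectivization.mk K w hwne).rep
          ∈ Submodule.span K (W : Set (Fin 3 → K)) := by
        rw [← hu]
        exact Submodule.smul_mem _ _ (Submodule.subset_span hwW)
      have := hvan _ hmem
      rwa [lfun_apply] at this
    obtain ⟨Q, hQa, hQL⟩ := Set.not_subset.mp (hnontriv (projLine a) ⟨a, ha, rfl⟩)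
    have hQrep : Q.rep ≠ 0 := Q.rep_nonzero
    have hgrange : LinearMap.range (lfun Q.rep) = ⊤ := by
      obtain ⟨i, hi⟩ : ∃ i, Q.rep i ≠ 0 := by
        by_contra hc
        push_neg at hc
        exact hQrep (funext hc)
      rw [LinearMap.range_eq_top]
      intro y
      refine ⟨(y / Q.rep i) • (Pi.single i 1 : Fin 3 → K), ?_⟩
      rw [map_smul, lfun_single, smul_eq_mul]
      field_simp
    have hgker : Module.finrank K (LinearMap.ker (lfun Q.rep)) = 2 := by
      have h1 := LinearMap.finrank_range_add_finrank_ker (lfun Q.rep)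
      rw [hgrange, finrank_top, Module.finrank_self] at h1
      have h3 : Module.finrank K (Fin 3 → K) = 3 := by
        rw [Module.finrank_pi]; simp
      omega
    have hnotle : ¬ (LinearMap.ker (lfun Q.rep) ≤ Submodule.span K {a}) := by
      intro hle
      have hmono := Submodule.finrank_mono hle
      rw [hgker, finrank_span_singleton ha] at hmono
      omega
    obtain ⟨b, hbker, hbspan⟩ := SetLike.not_le_iff_exists.mp hnotle
    have hbne : b ≠ 0 := fun h0 => hbspan (h0 ▸ Submodule.zero_mem _)
    obtain ⟨P, hPb, hPL⟩ := hblock b hbne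
    have hPa : P ∈ projLine a := hLsub hPL
    have hQb : Q ∈ projLine b := by
      have hk := hbker
      rw [LinearMap.mem_ker, lfun_apply] at hk
      show ∑ i, b i * Q.rep i = 0
      rw [← hk]
      exact Finset.sum_congr rfl fun i _ => mul_comm _ _
    exact hQL ((aux_line_inter ha hbspan hPa hPb hQa hQb) ▸ hPL)
  -- complement of U inside W
  have hUle : Submodule.map μ U' ≤ W := by
    rw [hUeq]; exact inf_le_left
  set UW : Submodule F ↥W := (Submodule.map μ U').comap W.subtype with hUWdef
  obtain ⟨TW, hcompl⟩ := Submodule.exists_isCompl UW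
  have hUW : Module.finrank F UW = h - 1 := by
    rw [← hwt, ← hUeq]
    exact (Submodule.comapSubtypeEquivOfLe hUle).finrank_eq
  have hTW : Module.finrank F TW = 2 := by
    have hadd := Submodule.finrank_add_eq_of_isCompl hcompl
    rw [hUW, hW] at hadd
    omega
  haveI : Module.Free F ↥TW := Module.Free.of_divisionRing F ↥TW
  set bT := Module.finBasisOfFinrankEq F ↥TW hTW with hbT
  set w_s : Fin 3 → K := ((bT 0 : ↥W) : Fin 3 → K) with hws
  set w_t : Fin 3 → K := ((bT 1 : ↥W) : Fin 3 → K) with hwt'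
  have hwsW : w_s ∈ W := ((bT 0 : ↥W)).2
  have hwtW : w_t ∈ W := ((bT 1 : ↥W)).2
  -- decomposition of elements of W
  have hdecomp : ∀ w ∈ W, ∃ (c : K) (a b : F),
      c ∈ U' ∧ w = c • m + a • w_s + b • w_t := by
    intro w hw
    have hmem : (⟨w, hw⟩ : ↥W) ∈ UW ⊔ TW := by
      rw [hcompl.sup_eq_top]; trivial
    obtain ⟨y, hy, z, hz, hyz⟩ := Submodule.mem_sup.mp hmem
    obtain ⟨c, hcU', hcm⟩ : ∃ c : K, c ∈ U' ∧ μ c = (y : Fin 3 → K) := by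
      have : (y : Fin 3 → K) ∈ Submodule.map μ U' := hy
      obtain ⟨c, hc, hceq⟩ := this
      exact ⟨c, hc, hceq⟩
    set zT : ↥TW := ⟨z, hz⟩ with hzT
    have hrepr := bT.sum_repr zT
    rw [Fin.sum_univ_two] at hrepr
    refine ⟨c, bT.repr zT 0, bT.repr zT 1, hcU', ?_⟩
    have hweq : w = (y : Fin 3 → K) + (z : Fin 3 → K) := by
      have := congrArg (fun v : ↥W => (v : Fin 3 → K)) hyz
      simpa using this.symm
    rw [hweq, ← hcm, hμapply, add_assoc]
    congr 1
    calc (z : Fin 3 → K) = ((zT : ↥W) : Fin 3 → K) := rfl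
      _ = (((bT.repr zT 0 • bT 0 + bT.repr zT 1 • bT 1 : ↥TW) : ↥W) : Fin 3 → K) := by
          rw [hrepr]
      _ = bT.repr zT 0 • w_s + bT.repr zT 1 • w_t := by
          simp [hws, hwt']
  -- the three vectors m, w_s, w_t form a K-basis
  set bvec : Fin 3 → (Fin 3 → K) := ![m, w_s, w_t] with hbvec
  have hWle : (W : Set (Fin 3 → K)) ⊆ (Submodule.span K (Set.range bvec) : Set _) := by
    intro w hw
    obtain ⟨c, a, b, hcU', rfl⟩ := hdecomp w hw
    have h0 : m ∈ Submodule.span K (Set.range bvec) :=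
      Submodule.subset_span ⟨0, rfl⟩
    have h1 : w_s ∈ Submodule.span K (Set.range bvec) :=
      Submodule.subset_span ⟨1, rfl⟩
    have h2 : w_t ∈ Submodule.span K (Set.range bvec) :=
      Submodule.subset_span ⟨2, rfl⟩
    refine Submodule.add_mem _ (Submodule.add_mem _ ?_ ?_) ?_
    · exact Submodule.smul_mem _ _ h0
    · rw [← IsScalarTower.algebraMap_smul K a w_s]
      exact Submodule.smul_mem _ _ h1
    · rw [← IsScalarTower.algebraMap_smul K b w_t]
      exact Submodule.smul_mem _ _ h2
  have htople : ⊤ ≤ Submodule.span K (Set.range bvec) := by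
    rw [← hspanW]
    rw [Submodule.span_le]
    exact hWle
  have hfr3 : Module.finrank K (Fin 3 → K) = 3 := by
    rw [Module.finrank_pi]; simp
  have hcard3 : Fintype.card (Fin 3) = Module.finrank K (Fin 3 → K) := by
    rw [hfr3, Fintype.card_fin]
  set B := basisOfTopLeSpanOfCardEqFinrank bvec htople hcard3 with hB
  -- target basis
  set tvec : Fin 3 → (Fin 3 → K) := ![![δ, 0, 0], ![x₀, 1, 0], ![0, 0, 1]] with htvec
  have htople' : ⊤ ≤ Submodule.span K (Set.range tvec) := by
    have h0 : tvec 0 ∈ Submodule.span K (Set.range tvec) := Submodule.subset_span ⟨0, rfl⟩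
    have h1 : tvec 1 ∈ Submodule.span K (Set.range tvec) := Submodule.subset_span ⟨1, rfl⟩
    have h2 : tvec 2 ∈ Submodule.span K (Set.range tvec) := Submodule.subset_span ⟨2, rfl⟩
    have e0 : (Pi.single 0 1 : Fin 3 → K) ∈ Submodule.span K (Set.range tvec) := by
      have : (Pi.single 0 1 : Fin 3 → K) = δ⁻¹ • tvec 0 := by
        funext i
        fin_cases i <;> simp [htvec, Pi.single_apply, inv_mul_cancel₀ hδ0]
      rw [this]
      exact Submodule.smul_mem _ _ h0
    have e1 : (Pi.single 1 1 : Fin 3 → K) ∈ Submodule.span K (Set.range tvec) := by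
      have : (Pi.single 1 1 : Fin 3 → K) = tvec 1 - x₀ • (Pi.single 0 1 : Fin 3 → K) := by
        funext i
        fin_cases i <;> simp [htvec, Pi.single_apply]
      rw [this]
      exact Submodule.sub_mem _ h1 (Submodule.smul_mem _ _ e0)
    have e2 : (Pi.single 2 1 : Fin 3 → K) ∈ Submodule.span K (Set.range tvec) := by
      have : (Pi.single 2 1 : Fin 3 → K) = tvec 2 := by
        funext i
        fin_cases i <;> simp [htvec, Pi.single_apply]
      rw [this]
      exact h2
    intro v _
    have hv : v = ∑ i, Pi.single i (v i) := (Finset.univ_sum_single v).symm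
    rw [hv]
    refine Submodule.sum_mem _ fun i _ => ?_
    have hsingle : (Pi.single i (v i) : Fin 3 → K) = v i • (Pi.single i 1 : Fin 3 → K) := by
      rw [← Pi.single_smul, smul_eq_mul, mul_one]
    rw [hsingle]
    fin_cases i
    · exact Submodule.smul_mem _ _ e0
    · exact Submodule.smul_mem _ _ e1
    · exact Submodule.smul_mem _ _ e2
  set B' := basisOfTopLeSpanOfCardEqFinrank tvec htople' hcard3 with hB'
  set σ : (Fin 3 → K) ≃ₗ[K] (Fin 3 → K) := B.equiv B' (Equiv.refl _) with hσ
  have hσi : ∀ i, σ (bvec i) = tvec i := by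
    intro i
    have h1 : B i = bvec i := by
      rw [hB, coe_basisOfTopLeSpanOfCardEqFinrank]
    have h2 : B' i = tvec i := by
      rw [hB', coe_basisOfTopLeSpanOfCardEqFinrank]
    rw [← h1, ← h2, hσ]
    exact B.equiv_apply i B' (Equiv.refl _)
  have hσm : σ m = ![δ, 0, 0] := hσi 0
  have hσs : σ w_s = ![x₀, 1, 0] := hσi 1
  have hσt : σ w_t = ![0, 0, 1] := hσi 2
  -- the key computation
  have hσw : ∀ (c : K) (a b : F),
      σ (c • m + a • w_s + b • w_t) = ![δ * c + FK a * x₀, FK a, FK b] := by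
    intro c a b
    rw [map_add, map_add, map_smul]
    rw [← IsScalarTower.algebraMap_smul K a w_s, ← IsScalarTower.algebraMap_smul K b w_t,
      map_smul, map_smul, hσm, hσs, hσt]
    funext i
    fin_cases i <;>
      simp [Matrix.cons_val_zero, Matrix.cons_val_one, Algebra.smul_def, mul_comm, hFK]
  -- trace computation
  have hTrcomp : ∀ (c : K) (a : F), c ∈ U' → Tr q h (δ * c + FK a * x₀) = FK a := by
    intro c a hc
    rw [Tr_add hqp, (hU'trace c).mp hc, Tr_smul (hfix a), hTrx₀, zero_add, mul_one]
  refine ⟨σ, ?_⟩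
  apply Set.eq_of_subset_of_subset
  · rintro P ⟨P₀, hP₀L, rfl⟩
    rw [hL] at hP₀L
    obtain ⟨w, hwW, hwne, rfl⟩ := hP₀L
    obtain ⟨c, a, b, hcU', hweq⟩ := hdecomp w hwW
    have hσweq : σ.toLinearMap w = ![δ * c + FK a * x₀, FK a, FK b] := by
      rw [hweq]
      simpa using hσw c a b
    set x : K := δ * c + FK a * x₀ with hxdef
    have hTra : Tr q h x = FK a := hTrcomp c a hcU'
    have hveq : σ.toLinearMap w = ![x, Tr q h x, FK b] := by
      rw [hσweq, hTra]
    have hσwne : σ.toLinearMap w ≠ 0 := by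
      intro hz
      exact hwne (by simpa using σ.map_eq_zero_iff.mp (by simpa using hz))
    have hv : (![x, Tr q h x, FK b] : Fin 3 → K) ≠ 0 := hveq ▸ hσwne
    refine ⟨x, b, ?_, hv, ?_⟩
    · by_contra hcon
      push_neg at hcon
      obtain ⟨hx0, hb0⟩ := hcon
      apply hv
      funext i
      fin_cases i <;> simp [hx0, hb0, Tr_zero hq0]
    · rw [Projectivization.map_mk, Projectivization.mk_eq_mk_iff']
      exact ⟨1, by rw [one_smul, hveq]⟩
  · rintro P ⟨x, y, hxy, hv, rfl⟩
    set a : F := τf x with hadef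
    have hFKa : FK a = Tr q h x := hτf x
    set c : K := δ⁻¹ * (x - FK a * x₀) with hcdef
    have hδc : δ * c = x - FK a * x₀ := by
      rw [hcdef, ← mul_assoc, mul_inv_cancel₀ hδ0, one_mul]
    have hcU' : c ∈ U' := by
      rw [hU'trace c, hδc]
      have hx' : (x - FK a * x₀) + FK a * x₀ = x := by ring
      have hTr := Tr_add hqp h (x - FK a * x₀) (FK a * x₀)
      rw [hx', Tr_smul (hfix a), hTrx₀, mul_one, ← hFKa] at hTr
      exact add_eq_right.mp hTr.symm
    set w : Fin 3 → K := c • m + a • w_s + y • w_t with hwdef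
    have hwW : w ∈ W := by
      refine Submodule.add_mem _ (Submodule.add_mem _ ?_ ?_) ?_
      · exact (hmemU' c).mp hcU'
      · exact Submodule.smul_mem _ _ hwsW
      · exact Submodule.smul_mem _ _ hwtW
    have hxx : δ * c + FK a * x₀ = x := by rw [hδc]; ring
    have hσweq : σ.toLinearMap w = ![x, Tr q h x, FK y] := by
      rw [hwdef]
      have := hσw c a y
      rw [hxx, hFKa] at this
      simpa using this
    have hwne : w ≠ 0 := by
      intro hz
      apply hv
      rw [← hσweq, hz, map_zero]
    refine ⟨Projectivization.mk K w hwne, ?_, ?_⟩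
    · rw [hL]
      exact ⟨w, hwW, hwne, rfl⟩
    · rw [Projectivization.map_mk, Projectivization.mk_eq_mk_iff']
      exact ⟨1, by rw [one_smul, hσweq]⟩
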